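/- Let n > m ≥ 2 be integers and let X be a random variable on {1,…,n} with probability mass function P_X satisfying P_X(1) ≥ P_X(2) ≥ … ≥ P_X(n). Define the probability mass function P_{X̃_m} on {1,…,m} as follows: if P_X(1) < 1/m, then P_{X̃_m} is the uniform distribution on {1,…,m}; otherwise P_{X̃_m}(i) = P_X(i) for i ∈ {1,…,n*} and P_{X̃_m}(i) = (1/(m−n*))·Σ_{j=n*+1}^{n} P_X(j) for i ∈ {n*+1,…,m}, where n* is the maximal integer i ∈ {1,…,m−1} such that P_X(i) ≥ (1/(m−i))·Σ_{j=i+1}^{n} P_X(j). Then for every α > 0, the maximum of H_α(Q) over all probability mass functions Q on {1,…,m} that majorize P_X equals H_α(P_{X̃_m}). -/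

import Mathlib

open Finset

/-- `P` is a probability mass function, strictly positive on `{1,…,n}`. -/
def IsPMF (n : ℕ) (P : ℕ → ℝ) : Prop :=
  (∀ i ∈ Finset.Icc 1 n, 0 < P i) ∧ ∑ i ∈ Finset.Icc 1 n, P i = 1

/-- The ratio of the maximal to minimal mass of `P` on `{1,…,n}` is at most `ρ`. -/
def RatioBdd (n : ℕ) (ρ : ℝ) (P : ℕ → ℝ) : Prop :=
  ∀ i ∈ Finset.Icc 1 n, ∀ j ∈ Finset.Icc 1 n, P i ≤ ρ * P j

/-- `P` is nonincreasing on `{1,…,n}`. -/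
def DecOn (n : ℕ) (P : ℕ → ℝ) : Prop :=
  ∀ i ∈ Finset.Icc 1 n, ∀ j ∈ Finset.Icc 1 n, i ≤ j → P j ≤ P i

/-- Sum of the `k` largest masses of `P` on `{1,…,n}`. -/
noncomputable def topSum (n : ℕ) (P : ℕ → ℝ) (k : ℕ) : ℝ :=
  sSup ((fun s : Finset ℕ => ∑ i ∈ s, P i) '' {s | s ⊆ Finset.Icc 1 n ∧ s.card = k})

/-- `P ≺ Q`: `P` is majorized by `Q`, both viewed on `{1,…,n}`. -/
def MajorizedBy (n : ℕ) (P Q : ℕ → ℝ) : Prop :=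
  ∀ k, 1 ≤ k → k ≤ n - 1 → topSum n P k ≤ topSum n Q k

/-- Zero-padding of a pmf on `{1,…,m}` outside of `{1,…,m}`. -/
def padTo (m : ℕ) (Q : ℕ → ℝ) : ℕ → ℝ := fun i => if i ≤ m then Q i else 0

/-- Rényi entropy of order `α` of `P` on `{1,…,n}` (Shannon entropy for `α = 1`);
natural logarithms. -/
noncomputable def renyiH (n : ℕ) (α : ℝ) (P : ℕ → ℝ) : ℝ :=
  if α = 1 then -∑ i ∈ Finset.Icc 1 n, P i * Real.log (P i)
  else (1 - α)⁻¹ * Real.log (∑ i ∈ Finset.Icc 1 n, P i ^ α)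

/-- `c_α^{(n)}(ρ) = log n − min_{P ∈ 𝒫_n(ρ)} H_α(P)` for `n ≥ 2`, and `0` for `n ≤ 1`. -/
noncomputable def cN (α ρ : ℝ) (n : ℕ) : ℝ :=
  if n ≤ 1 then 0
  else Real.log n - sInf (renyiH n α '' {P | IsPMF n P ∧ RatioBdd n ρ P})

/-- The closed-form expression for `c_α^{(∞)}(ρ)`, `α ∈ (0,1) ∪ (1,∞)`. -/
noncomputable def cInfinity (α ρ : ℝ) : ℝ :=
  (α - 1)⁻¹ * Real.log (1 + (1 + α * (ρ - 1) - ρ ^ α) / ((1 - α) * (ρ - 1)))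
    - α / (α - 1) * Real.log (1 + (1 + α * (ρ - 1) - ρ ^ α) / ((1 - α) * (ρ ^ α - 1)))

/-- `v(α) := c_α^{(∞)}(2)`, with the continuous extension at `α = 1`. -/
noncomputable def vFun (α : ℝ) : ℝ :=
  if α = 1 then Real.log (2 / (Real.exp 1 * Real.log 2))
  else Real.log ((α - 1) / ((2 : ℝ) ^ α - 2)) - α / (α - 1) * Real.log (α / ((2 : ℝ) ^ α - 1))

/-- `n*`: the maximal `i ∈ {1,…,m−1}` with `P i ≥ (m−i)⁻¹ ∑_{j=i+1}^n P j`. -/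
noncomputable def nStar (n m : ℕ) (P : ℕ → ℝ) : ℕ :=
  sSup {i : ℕ | 1 ≤ i ∧ i ≤ m - 1 ∧
    ((m : ℝ) - (i : ℝ))⁻¹ * ∑ j ∈ Finset.Icc (i + 1) n, P j ≤ P i}

/-- The pmf of `X̃_m` on `{1,…,m}`, built from a nonincreasing pmf `P` on `{1,…,n}`. -/
noncomputable def tildeX (n m : ℕ) (P : ℕ → ℝ) : ℕ → ℝ := fun i =>
  if P 1 < 1 / (m : ℝ) then 1 / (m : ℝ)
  else if i ≤ nStar n m P then P i
  else ((m : ℝ) - (nStar n m P : ℝ))⁻¹ * ∑ j ∈ Finset.Icc (nStar n m P + 1) n, P j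

/-- The pmf of `Ỹ_m` on `{1,…,m}`. -/
def tildeY (n m : ℕ) (P : ℕ → ℝ) : ℕ → ℝ := fun i =>
  if i = 1 then ∑ j ∈ Finset.Icc 1 (n - m + 1), P j else P (n - m + i)

/-- The pmf of `f(X)`: `(push n f P) j = ∑_{i ∈ {1,…,n}, f i = j} P i`. -/
def push (n : ℕ) (f : ℕ → ℕ) (P : ℕ → ℝ) : ℕ → ℝ := fun j =>
  ∑ i ∈ (Finset.Icc 1 n).filter (fun i => f i = j), P i

/-- The set `{1,…,n}^k` of source sequences of length `k`. -/
def seqSet (n k : ℕ) : Finset (Fin k → ℕ) := Fintype.piFinset fun _ => Finset.Icc 1 n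

/-- Product (i.i.d.) probability of a sequence. -/
def prodP (k : ℕ) (P : ℕ → ℝ) (x : Fin k → ℕ) : ℝ := ∏ i, P (x i)

/-- `g` is a ranking function for the i.i.d. vector on `{1,…,n}^k` with marginal `P`:
a bijection onto `{1,…,n^k}` which assigns smaller ranks to larger masses. -/
def IsRanking (n k : ℕ) (P : ℕ → ℝ) (g : (Fin k → ℕ) → ℕ) : Prop :=
  Set.BijOn g (↑(seqSet n k)) (Set.Icc 1 (n ^ k)) ∧
    ∀ x ∈ seqSet n k, ∀ y ∈ seqSet n k, prodP k P y < prodP k P x → g x < g y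

/-- The `ρ`-th guessing moment `E[g(Z^k)^ρ]`. -/
noncomputable def gmoment (n k : ℕ) (P : ℕ → ℝ) (g : (Fin k → ℕ) → ℕ) (ρ : ℝ) : ℝ :=
  ∑ x ∈ seqSet n k, prodP k P x * (g x : ℝ) ^ ρ

/-- Kraft inequality for a `D`-ary length function on `{1,…,n}^k`. -/
def Kraft (n k D : ℕ) (ℓ : (Fin k → ℕ) → ℕ) : Prop :=
  ∑ x ∈ seqSet n k, (D : ℝ) ^ (-(ℓ x : ℝ)) ≤ 1

/-- Scaled cumulant generating function `Λ_k(ρ)` of the codeword lengths (base-`D` log). -/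
noncomputable def cgf (n k D : ℕ) (P : ℕ → ℝ) (ℓ : (Fin k → ℕ) → ℕ) (ρ : ℝ) : ℝ :=
  (1 / (k : ℝ)) * Real.logb D (∑ x ∈ seqSet n k, prodP k P x * (D : ℝ) ^ (ρ * (ℓ x : ℝ)))

/-- `i_β` of Lemma 2. -/
noncomputable def iBeta (n : ℕ) (ρ β : ℝ) : ℕ := Nat.floor ((1 - (n : ℝ) * β) / ((ρ - 1) * β))

/-- The pmf `Q_β` of Lemma 2. -/
noncomputable def Qbeta (n : ℕ) (ρ β : ℝ) : ℕ → ℝ := fun j =>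
  if j ≤ iBeta n ρ β then ρ * β
  else if j = iBeta n ρ β + 1 then
    1 - ((n : ℝ) + (iBeta n ρ β : ℝ) * ρ - (iBeta n ρ β : ℝ) - 1) * β
  else β



lemma sum_le_sum_Icc_of_dec {n : ℕ} {R : ℕ → ℝ} (hnn : ∀ i ∈ Finset.Icc 1 n, 0 ≤ R i)
    (hdec : DecOn n R) :
    ∀ k, k ≤ n → ∀ s : Finset ℕ, s ⊆ Finset.Icc 1 n → s.card = k →
      ∑ i ∈ s, R i ≤ ∑ i ∈ Finset.Icc 1 k, R i := by
  intro k
  induction k with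
  | zero =>
    intro _ s _ hcard
    rw [Finset.card_eq_zero] at hcard
    subst hcard; simp
  | succ k ih =>
    intro hkn s hs hcard
    have hne : s.Nonempty := Finset.card_pos.mp (by omega)
    have hMs : s.max' hne ∈ s := s.max'_mem hne
    set M := s.max' hne with hM
    have hMIcc := hs hMs
    rw [Finset.mem_Icc] at hMIcc
    have hkM : k + 1 ≤ M := by
      have hsub : s ⊆ Finset.Icc 1 M := fun x hx =>
        Finset.mem_Icc.mpr ⟨(Finset.mem_Icc.mp (hs hx)).1, s.le_max' x hx⟩
      have := Finset.card_le_card hsub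
      rw [hcard, Nat.card_Icc] at this
      omega
    have herase : (s.erase M).card = k := by
      rw [Finset.card_erase_of_mem hMs, hcard]
      omega
    have h1 : ∑ i ∈ s.erase M, R i ≤ ∑ i ∈ Finset.Icc 1 k, R i :=
      ih (by omega) _ ((Finset.erase_subset _ _).trans hs) herase
    have h2 : R M ≤ R (k + 1) :=
      hdec (k + 1) (Finset.mem_Icc.mpr ⟨by omega, by omega⟩) M
        (Finset.mem_Icc.mpr hMIcc) hkM
    calc ∑ i ∈ s, R i = ∑ i ∈ s.erase M, R i + R M := (Finset.sum_erase_add _ _ hMs).symm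
      _ ≤ ∑ i ∈ Finset.Icc 1 k, R i + R (k + 1) := add_le_add h1 h2
      _ = ∑ i ∈ Finset.Icc 1 (k + 1), R i := (Finset.sum_Icc_succ_top (by omega) R).symm

lemma topSum_eq_prefix {n k : ℕ} {R : ℕ → ℝ} (hnn : ∀ i ∈ Finset.Icc 1 n, 0 ≤ R i)
    (hdec : DecOn n R) (hk : k ≤ n) :
    topSum n R k = ∑ i ∈ Finset.Icc 1 k, R i := by
  apply IsGreatest.csSup_eq
  constructor
  · exact ⟨Finset.Icc 1 k, ⟨Finset.Icc_subset_Icc_right hk, by simp⟩, rfl⟩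
  · rintro x ⟨s, ⟨hs, hcard⟩, rfl⟩
    exact sum_le_sum_Icc_of_dec hnn hdec k hk s hs hcard

lemma topSum_comp {n : ℕ} (R : ℕ → ℝ) {σ τ : ℕ → ℕ}
    (hσ : ∀ i ∈ Finset.Icc 1 n, σ i ∈ Finset.Icc 1 n)
    (hτ : ∀ i ∈ Finset.Icc 1 n, τ i ∈ Finset.Icc 1 n)
    (hστ : ∀ i ∈ Finset.Icc 1 n, τ (σ i) = i)
    (hτσ : ∀ i ∈ Finset.Icc 1 n, σ (τ i) = i)
    (k : ℕ) : topSum n (fun i => R (σ i)) k = topSum n R k := by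
  have hinjσ : ∀ s : Finset ℕ, s ⊆ Finset.Icc 1 n →
      ∀ a ∈ s, ∀ b ∈ s, σ a = σ b → a = b := by
    intro s hs a ha b hb h
    have := congrArg τ h
    rwa [hστ a (hs ha), hστ b (hs hb)] at this
  have hinjτ : ∀ s : Finset ℕ, s ⊆ Finset.Icc 1 n →
      ∀ a ∈ s, ∀ b ∈ s, τ a = τ b → a = b := by
    intro s hs a ha b hb h
    have := congrArg σ h
    rwa [hτσ a (hs ha), hτσ b (hs hb)] at this
  unfold topSum
  congr 1
  ext x
  simp only [Set.mem_image, Set.mem_setOf_eq]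
  constructor
  · rintro ⟨s, ⟨hs, hcard⟩, rfl⟩
    refine ⟨s.image σ, ⟨?_, ?_⟩, ?_⟩
    · intro j hj
      obtain ⟨i, hi, rfl⟩ := Finset.mem_image.mp hj
      exact hσ i (hs hi)
    · rw [Finset.card_image_of_injOn fun a ha b hb => hinjσ s hs a ha b hb, hcard]
    · rw [Finset.sum_image (hinjσ s hs)]
  · rintro ⟨s, ⟨hs, hcard⟩, rfl⟩
    refine ⟨s.image τ, ⟨?_, ?_⟩, ?_⟩
    · intro j hj
      obtain ⟨i, hi, rfl⟩ := Finset.mem_image.mp hj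
      exact hτ i (hs hi)
    · rw [Finset.card_image_of_injOn fun a ha b hb => hinjτ s hs a ha b hb, hcard]
    · rw [Finset.sum_image (hinjτ s hs)]
      exact Finset.sum_congr rfl fun i hi => by rw [hτσ i (hs hi)]

lemma sum_comp_perm {m : ℕ} (F : ℕ → ℝ) {σ τ : ℕ → ℕ}
    (hσ : ∀ i ∈ Finset.Icc 1 m, σ i ∈ Finset.Icc 1 m)
    (hστ : ∀ i ∈ Finset.Icc 1 m, τ (σ i) = i) :
    ∑ i ∈ Finset.Icc 1 m, F (σ i) = ∑ i ∈ Finset.Icc 1 m, F i := by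
  have hinj : ∀ a ∈ Finset.Icc 1 m, ∀ b ∈ Finset.Icc 1 m, σ a = σ b → a = b := by
    intro a ha b hb h
    have := congrArg τ h
    rwa [hστ a ha, hστ b hb] at this
  have himg : (Finset.Icc 1 m).image σ = Finset.Icc 1 m := by
    apply Finset.eq_of_subset_of_card_le
    · intro j hj
      obtain ⟨i, hi, rfl⟩ := Finset.mem_image.mp hj
      exact hσ i hi
    · rw [Finset.card_image_of_injOn hinj]
  conv_rhs => rw [← himg]
  rw [Finset.sum_image hinj]

lemma abel_nonneg (m : ℕ) (c d : ℕ → ℝ)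
    (hc : ∀ i, 1 ≤ i → i + 1 ≤ m → c (i + 1) ≤ c i)
    (hD : ∀ k, 1 ≤ k → k ≤ m → 0 ≤ ∑ i ∈ Finset.Icc 1 k, d i)
    (hDm : ∑ i ∈ Finset.Icc 1 m, d i = 0) :
    0 ≤ ∑ i ∈ Finset.Icc 1 m, c i * d i := by
  rcases Nat.eq_zero_or_pos m with rfl | hm
  · rw [Finset.Icc_eq_empty (by omega)]; simp
  have key : ∀ f : ℕ → ℝ, ∀ j : ℕ, ∑ i ∈ Finset.Icc 1 j, f i = ∑ i ∈ Finset.range j, f (i + 1) := by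
    intro f j
    rw [← Finset.Ico_add_one_right_eq_Icc, Finset.sum_Ico_eq_sum_range]
    exact Finset.sum_congr rfl fun i _ => by rw [Nat.add_comm]
  rw [key]
  have H := Finset.sum_range_by_parts (fun i => c (i + 1)) (fun i => d (i + 1)) m
  simp only [smul_eq_mul] at H
  rw [H]
  have hG : ∑ i ∈ Finset.range m, d (i + 1) = 0 := by rw [← key]; exact hDm
  rw [hG, mul_zero, zero_sub]
  have hterm : ∀ i ∈ Finset.range (m - 1),
      (c (i + 1 + 1) - c (i + 1)) * (∑ j ∈ Finset.range (i + 1), d (j + 1)) ≤ 0 := by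
    intro i hi
    have hi' : i < m - 1 := Finset.mem_range.mp hi
    apply mul_nonpos_of_nonpos_of_nonneg
    · have := hc (i + 1) (by omega) (by omega); linarith
    · rw [← key]; exact hD (i + 1) (by omega) (by omega)
  have hsum2 := Finset.sum_nonpos hterm
  linarith

lemma core_ineq (m : ℕ) (p q : ℕ → ℝ) (φ ψ : ℝ → ℝ)
    (hppos : ∀ i ∈ Finset.Icc 1 m, 0 < p i) (hqpos : ∀ i ∈ Finset.Icc 1 m, 0 < q i)
    (hsum : ∑ i ∈ Finset.Icc 1 m, p i = ∑ i ∈ Finset.Icc 1 m, q i)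
    (hpd : DecOn m p)
    (hpre : ∀ k, 1 ≤ k → k ≤ m → ∑ i ∈ Finset.Icc 1 k, p i ≤ ∑ i ∈ Finset.Icc 1 k, q i)
    (hgrad : ∀ x y : ℝ, 0 < x → 0 < y → φ x + ψ x * (y - x) ≤ φ y)
    (hmono : ∀ x y : ℝ, 0 < x → x ≤ y → ψ x ≤ ψ y) :
    ∑ i ∈ Finset.Icc 1 m, φ (p i) ≤ ∑ i ∈ Finset.Icc 1 m, φ (q i) := by
  have habel : 0 ≤ ∑ i ∈ Finset.Icc 1 m, ψ (p i) * (q i - p i) := by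
    apply abel_nonneg m (fun i => ψ (p i)) (fun i => q i - p i)
    · intro i hi1 him
      exact hmono _ _ (hppos (i + 1) (Finset.mem_Icc.mpr ⟨by omega, by omega⟩))
        (hpd i (Finset.mem_Icc.mpr ⟨by omega, by omega⟩) (i + 1)
          (Finset.mem_Icc.mpr ⟨by omega, by omega⟩) (by omega))
    · intro k hk1 hkm
      rw [Finset.sum_sub_distrib]
      have := hpre k hk1 hkm
      linarith
    · rw [Finset.sum_sub_distrib, hsum, sub_self]
  have hstep : ∀ i ∈ Finset.Icc 1 m, φ (p i) + ψ (p i) * (q i - p i) ≤ φ (q i) := fun i hi =>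
    hgrad _ _ (hppos i hi) (hqpos i hi)
  have := Finset.sum_le_sum hstep
  rw [Finset.sum_add_distrib] at this
  linarith

lemma bern_ge_one {α x y : ℝ} (hα : 1 ≤ α) (hx : 0 < x) (hy : 0 < y) :
    x ^ α + α * x ^ (α - 1) * (y - x) ≤ y ^ α := by
  have hu : 0 < y / x := div_pos hy hx
  have hb := one_add_mul_self_le_rpow_one_add (s := y / x - 1) (by linarith) hα
  rw [show (1 : ℝ) + (y / x - 1) = y / x by ring] at hb
  have hxα : 0 < x ^ α := Real.rpow_pos_of_pos hx α
  have h2 : x ^ α * (1 + α * (y / x - 1)) ≤ x ^ α * (y / x) ^ α :=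
    mul_le_mul_of_nonneg_left hb hxα.le
  rw [← Real.mul_rpow hx.le hu.le, show x * (y / x) = y by field_simp] at h2
  have hx1 : x ^ (α - 1) = x ^ α / x := by rw [Real.rpow_sub hx, Real.rpow_one]
  have hfin : x ^ α * (1 + α * (y / x - 1)) = x ^ α + α * x ^ (α - 1) * (y - x) := by
    rw [hx1]; field_simp
  linarith [h2, hfin.symm.le]

lemma bern_le_one {α x y : ℝ} (hα0 : 0 < α) (hα : α ≤ 1) (hx : 0 < x) (hy : 0 < y) :
    y ^ α ≤ x ^ α + α * x ^ (α - 1) * (y - x) := by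
  have hu : 0 < y / x := div_pos hy hx
  have huα : 0 < (y / x) ^ α := Real.rpow_pos_of_pos hu α
  have hinv : 1 ≤ 1 / α := by rw [le_div_iff₀ hα0]; linarith
  have hb := one_add_mul_self_le_rpow_one_add (s := (y / x) ^ α - 1) (by linarith) hinv
  rw [show (1 : ℝ) + ((y / x) ^ α - 1) = (y / x) ^ α by ring] at hb
  have heq : ((y / x) ^ α) ^ (1 / α) = y / x := by
    rw [← Real.rpow_mul hu.le, mul_one_div, div_self hα0.ne', Real.rpow_one]
  rw [heq] at hb
  -- hb : 1 + 1/α * ((y/x)^α - 1) ≤ y/x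
  have h3 : (y / x) ^ α ≤ 1 + α * (y / x - 1) := by
    have h4 : α * (1 + 1 / α * ((y / x) ^ α - 1)) ≤ α * (y / x) :=
      mul_le_mul_of_nonneg_left hb hα0.le
    have h5 : α * (1 + 1 / α * ((y / x) ^ α - 1)) = α + ((y / x) ^ α - 1) := by
      field_simp
    nlinarith
  have hxα : 0 < x ^ α := Real.rpow_pos_of_pos hx α
  have h2 : x ^ α * (y / x) ^ α ≤ x ^ α * (1 + α * (y / x - 1)) :=
    mul_le_mul_of_nonneg_left h3 hxα.le
  rw [← Real.mul_rpow hx.le hu.le, show x * (y / x) = y by field_simp] at h2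
  have hx1 : x ^ (α - 1) = x ^ α / x := by rw [Real.rpow_sub hx, Real.rpow_one]
  have hfin : x ^ α * (1 + α * (y / x - 1)) = x ^ α + α * x ^ (α - 1) * (y - x) := by
    rw [hx1]; field_simp
  linarith

lemma xlogx_grad {x y : ℝ} (hx : 0 < x) (hy : 0 < y) :
    x * Real.log x + (Real.log x + 1) * (y - x) ≤ y * Real.log y := by
  have hl : Real.log (x / y) ≤ x / y - 1 := Real.log_le_sub_one_of_pos (div_pos hx hy)
  rw [Real.log_div hx.ne' hy.ne'] at hl
  have h2 : y * (Real.log x - Real.log y) ≤ y * (x / y - 1) :=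
    mul_le_mul_of_nonneg_left hl hy.le
  have h3 : y * (x / y - 1) = x - y := by field_simp
  nlinarith

lemma schur_le {m : ℕ} (hm : 1 ≤ m) {p q : ℕ → ℝ} (hp : IsPMF m p) (hq : IsPMF m q)
    (hpd : DecOn m p)
    (hpre : ∀ k, 1 ≤ k → k ≤ m → ∑ i ∈ Finset.Icc 1 k, p i ≤ ∑ i ∈ Finset.Icc 1 k, q i)
    {α : ℝ} (hα : 0 < α) : renyiH m α q ≤ renyiH m α p := by
  obtain ⟨hppos, hpsum⟩ := hp
  obtain ⟨hqpos, hqsum⟩ := hq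
  have hsum : ∑ i ∈ Finset.Icc 1 m, p i = ∑ i ∈ Finset.Icc 1 m, q i := by rw [hpsum, hqsum]
  have hne : (Finset.Icc 1 m).Nonempty := ⟨1, Finset.mem_Icc.mpr ⟨le_refl _, hm⟩⟩
  unfold renyiH
  by_cases h1 : α = 1
  · subst h1
    rw [if_pos rfl, if_pos rfl]
    have hcore := core_ineq m p q (fun x => x * Real.log x) (fun x => Real.log x + 1)
      hppos hqpos hsum hpd hpre (fun x y hx hy => xlogx_grad hx hy)
      (fun x y hx hxy => by
        have := Real.log_le_log hx hxy
        linarith)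
    linarith
  · simp only [if_neg h1]
    rcases lt_or_gt_of_ne h1 with hlt | hgt
    · -- α < 1
      have hcore := core_ineq m p q (fun x => -(x ^ α)) (fun x => -(α * x ^ (α - 1)))
        hppos hqpos hsum hpd hpre
        (fun x y hx hy => by
          have := bern_le_one hα hlt.le hx hy
          linarith)
        (fun x y hx hxy => by
          have h := Real.rpow_le_rpow_of_nonpos hx hxy (by linarith : α - 1 ≤ 0)
          have := mul_le_mul_of_nonneg_left h hα.le
          linarith)
      simp only [Finset.sum_neg_distrib] at hcore
      have hle : ∑ i ∈ Finset.Icc 1 m, q i ^ α ≤ ∑ i ∈ Finset.Icc 1 m, p i ^ α := by linarith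
      have hqs : 0 < ∑ i ∈ Finset.Icc 1 m, q i ^ α :=
        Finset.sum_pos (fun i hi => Real.rpow_pos_of_pos (hqpos i hi) α) hne
      have hlog := Real.log_le_log hqs hle
      have hcoef : (0:ℝ) ≤ (1 - α)⁻¹ := le_of_lt (inv_pos.mpr (by linarith))
      exact mul_le_mul_of_nonneg_left hlog hcoef
    · -- α > 1
      have hcore := core_ineq m p q (fun x => x ^ α) (fun x => α * x ^ (α - 1))
        hppos hqpos hsum hpd hpre
        (fun x y hx hy => bern_ge_one hgt.le hx hy)
        (fun x y hx hxy => by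
          have h := Real.rpow_le_rpow hx.le hxy (by linarith : (0:ℝ) ≤ α - 1)
          exact mul_le_mul_of_nonneg_left h hα.le)
      have hps : 0 < ∑ i ∈ Finset.Icc 1 m, p i ^ α :=
        Finset.sum_pos (fun i hi => Real.rpow_pos_of_pos (hppos i hi) α) hne
      have hlog := Real.log_le_log hps hcore
      have hcoef : (1 - α)⁻¹ ≤ 0 := by
        apply inv_nonpos.mpr; linarith
      nlinarith [hlog, hcoef]

lemma exists_sorted (m : ℕ) (Q : ℕ → ℝ) :
    ∃ σ τ : ℕ → ℕ,
      (∀ i ∈ Finset.Icc 1 m, σ i ∈ Finset.Icc 1 m) ∧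
      (∀ i ∈ Finset.Icc 1 m, τ i ∈ Finset.Icc 1 m) ∧
      (∀ i, i ∉ Finset.Icc 1 m → σ i = i) ∧
      (∀ i, i ∉ Finset.Icc 1 m → τ i = i) ∧
      (∀ i ∈ Finset.Icc 1 m, τ (σ i) = i) ∧
      (∀ i ∈ Finset.Icc 1 m, σ (τ i) = i) ∧
      DecOn m (fun i => Q (σ i)) := by
  set g : Fin m → ℝ := fun i => -Q (i.1 + 1) with hg
  set e := Tuple.sort g with he
  refine ⟨fun i => if h : 1 ≤ i ∧ i ≤ m then (e ⟨i - 1, by omega⟩).1 + 1 else i,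
          fun i => if h : 1 ≤ i ∧ i ≤ m then (e.symm ⟨i - 1, by omega⟩).1 + 1 else i,
          ?_, ?_, ?_, ?_, ?_, ?_, ?_⟩
  · intro i hi
    rw [Finset.mem_Icc] at hi
    simp only [dif_pos hi, Finset.mem_Icc]
    exact ⟨by omega, by have := (e ⟨i - 1, by omega⟩).2; omega⟩
  · intro i hi
    rw [Finset.mem_Icc] at hi
    simp only [dif_pos hi, Finset.mem_Icc]
    exact ⟨by omega, by have := (e.symm ⟨i - 1, by omega⟩).2; omega⟩
  · intro i hi
    have h : ¬(1 ≤ i ∧ i ≤ m) := by simpa [Finset.mem_Icc] using hi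
    simp only [dif_neg h]
  · intro i hi
    have h : ¬(1 ≤ i ∧ i ≤ m) := by simpa [Finset.mem_Icc] using hi
    simp only [dif_neg h]
  · intro i hi
    rw [Finset.mem_Icc] at hi
    simp only [dif_pos hi]
    have h2 : 1 ≤ (e ⟨i - 1, by omega⟩).1 + 1 ∧ (e ⟨i - 1, by omega⟩).1 + 1 ≤ m :=
      ⟨by omega, by have := (e ⟨i - 1, by omega⟩).2; omega⟩
    simp only [dif_pos h2]
    have hfin : (⟨(e ⟨i - 1, by omega⟩).1 + 1 - 1, by omega⟩ : Fin m) = e ⟨i - 1, by omega⟩ :=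
      Fin.ext (by simp)
    rw [hfin, Equiv.symm_apply_apply]
    show i - 1 + 1 = i
    omega
  · intro i hi
    rw [Finset.mem_Icc] at hi
    simp only [dif_pos hi]
    have h2 : 1 ≤ (e.symm ⟨i - 1, by omega⟩).1 + 1 ∧ (e.symm ⟨i - 1, by omega⟩).1 + 1 ≤ m :=
      ⟨by omega, by have := (e.symm ⟨i - 1, by omega⟩).2; omega⟩
    simp only [dif_pos h2]
    have hfin : (⟨(e.symm ⟨i - 1, by omega⟩).1 + 1 - 1, by omega⟩ : Fin m) =
        e.symm ⟨i - 1, by omega⟩ := Fin.ext (by simp)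
    rw [hfin, Equiv.apply_symm_apply]
    show i - 1 + 1 = i
    omega
  · intro i hi j hj hij
    rw [Finset.mem_Icc] at hi hj
    dsimp only
    simp only [dif_pos hi, dif_pos hj]
    have hmono := Tuple.monotone_sort g
    have hle : (⟨i - 1, by omega⟩ : Fin m) ≤ ⟨j - 1, by omega⟩ := by
      rw [Fin.le_def]; dsimp; omega
    have := hmono hle
    simp only [Function.comp_apply, hg] at this
    rw [← he] at this
    linarith

lemma pad_nonneg {m n : ℕ} {R : ℕ → ℝ} (hpos : ∀ i ∈ Finset.Icc 1 m, 0 < R i) :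
    ∀ i ∈ Finset.Icc 1 n, 0 ≤ padTo m R i := by
  intro i hi
  rw [Finset.mem_Icc] at hi
  unfold padTo
  split
  · exact (hpos i (Finset.mem_Icc.mpr ⟨hi.1, by omega⟩)).le
  · exact le_refl 0

lemma pad_dec {m n : ℕ} {R : ℕ → ℝ} (hpos : ∀ i ∈ Finset.Icc 1 m, 0 < R i)
    (hdec : DecOn m R) : DecOn n (padTo m R) := by
  intro i hi j hj hij
  rw [Finset.mem_Icc] at hi hj
  unfold padTo
  by_cases hjm : j ≤ m
  · rw [if_pos hjm, if_pos (by omega : i ≤ m)]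
    exact hdec i (Finset.mem_Icc.mpr ⟨hi.1, by omega⟩) j (Finset.mem_Icc.mpr ⟨hj.1, hjm⟩) hij
  · rw [if_neg hjm]
    split
    · exact (hpos i (Finset.mem_Icc.mpr ⟨hi.1, by assumption⟩)).le
    · exact le_refl 0

lemma pad_prefix {m k : ℕ} (R : ℕ → ℝ) (hkm : k ≤ m) :
    ∑ i ∈ Finset.Icc 1 k, padTo m R i = ∑ i ∈ Finset.Icc 1 k, R i := by
  apply Finset.sum_congr rfl
  intro i hi
  rw [Finset.mem_Icc] at hi
  exact if_pos (by omega)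

lemma pad_prefix_ge {m k : ℕ} (R : ℕ → ℝ) (hmk : m ≤ k) :
    ∑ i ∈ Finset.Icc 1 k, padTo m R i = ∑ i ∈ Finset.Icc 1 m, R i := by
  have hsplit : ∑ i ∈ Finset.Ioc 0 m, padTo m R i + ∑ i ∈ Finset.Ioc m k, padTo m R i
      = ∑ i ∈ Finset.Ioc 0 k, padTo m R i :=
    Finset.sum_Ioc_consecutive _ (by omega) hmk
  have h0 : ∑ i ∈ Finset.Ioc m k, padTo m R i = 0 := by
    apply Finset.sum_eq_zero
    intro i hi
    rw [Finset.mem_Ioc] at hi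
    exact if_neg (by omega)
  rw [← Finset.Icc_add_one_left_eq_Ioc] at hsplit
  rw [show Finset.Ioc 0 k = Finset.Icc 1 k from (Finset.Icc_add_one_left_eq_Ioc 0 k).symm] at hsplit
  rw [← hsplit, h0, add_zero]
  exact pad_prefix R (le_refl m)
lemma prefix_split {j k : ℕ} (f : ℕ → ℝ) (hjk : j ≤ k) :
    ∑ i ∈ Finset.Icc 1 k, f i = ∑ i ∈ Finset.Icc 1 j, f i + ∑ i ∈ Finset.Ioc j k, f i := by
  rw [show Finset.Icc 1 k = Finset.Ioc 0 k from (Finset.Icc_add_one_left_eq_Ioc 0 k).symm,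
      show Finset.Icc 1 j = Finset.Ioc 0 j from (Finset.Icc_add_one_left_eq_Ioc 0 j).symm,
      Finset.sum_Ioc_consecutive _ (Nat.zero_le j) hjk]

lemma prefix_const (k : ℕ) (c : ℝ) : ∑ _i ∈ Finset.Icc 1 k, c = (k : ℝ) * c := by
  rw [Finset.sum_const, Nat.card_Icc, nsmul_eq_mul]
  norm_num


lemma main_of (n m : ℕ) (hm : 2 ≤ m) (hmn : m < n) (P X : ℕ → ℝ)
    (hP : IsPMF n P) (hdec : DecOn n P)
    (hX : IsPMF m X) (hXdec : DecOn m X)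
    (H3 : ∀ k, 1 ≤ k → k ≤ m → ∑ i ∈ Finset.Icc 1 k, P i ≤ ∑ i ∈ Finset.Icc 1 k, X i)
    (H4 : ∀ q : ℕ → ℝ, IsPMF m q → DecOn m q →
        (∀ k, 1 ≤ k → k ≤ m → ∑ i ∈ Finset.Icc 1 k, P i ≤ ∑ i ∈ Finset.Icc 1 k, q i) →
        ∀ k, 1 ≤ k → k ≤ m → ∑ i ∈ Finset.Icc 1 k, X i ≤ ∑ i ∈ Finset.Icc 1 k, q i)
    (α : ℝ) (hα : 0 < α) :
    IsGreatest (renyiH m α '' {Q | IsPMF m Q ∧ MajorizedBy n P (padTo m Q)})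
      (renyiH m α X) := by
  obtain ⟨hPpos, hPsum⟩ := hP
  have hPnn : ∀ i ∈ Finset.Icc 1 n, 0 ≤ P i := fun i hi => (hPpos i hi).le
  have hXpos := hX.1
  have hXsum := hX.2
  have hprefP_le_one : ∀ k, k ≤ n → ∑ i ∈ Finset.Icc 1 k, P i ≤ 1 := by
    intro k hk
    rw [← hPsum]
    exact Finset.sum_le_sum_of_subset_of_nonneg (Finset.Icc_subset_Icc_right hk)
      (fun i hi _ => hPnn i hi)
  have hmaj : MajorizedBy n P (padTo m X) := by
    intro k hk1 hk2
    rw [topSum_eq_prefix hPnn hdec (by omega),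
        topSum_eq_prefix (pad_nonneg hXpos) (pad_dec hXpos hXdec) (by omega)]
    by_cases hkm : k ≤ m
    · rw [pad_prefix X hkm]
      exact H3 k hk1 hkm
    · rw [pad_prefix_ge X (by omega)]
      rw [hXsum]
      exact hprefP_le_one k (by omega)
  constructor
  · exact ⟨X, ⟨hX, hmaj⟩, rfl⟩
  · rintro x ⟨Q, ⟨hQ, hQmaj⟩, rfl⟩
    obtain ⟨σ, τ, hσ, hτ, hσid, hτid, hστ, hτσ, hqdec⟩ := exists_sorted m Q
    set q : ℕ → ℝ := fun i => Q (σ i) with hq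
    have hqpmf : IsPMF m q := by
      constructor
      · intro i hi
        exact hQ.1 (σ i) (hσ i hi)
      · rw [hq]
        rw [sum_comp_perm Q hσ hστ]
        exact hQ.2
    -- extension of σ to Icc 1 n
    have hσn : ∀ i ∈ Finset.Icc 1 n, σ i ∈ Finset.Icc 1 n := by
      intro i hi
      rw [Finset.mem_Icc] at hi
      by_cases him : i ≤ m
      · have := hσ i (Finset.mem_Icc.mpr ⟨hi.1, him⟩)
        rw [Finset.mem_Icc] at this ⊢
        omega
      · rw [hσid i (by rw [Finset.mem_Icc]; omega)]
        rw [Finset.mem_Icc]; omega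
    have hτn : ∀ i ∈ Finset.Icc 1 n, τ i ∈ Finset.Icc 1 n := by
      intro i hi
      rw [Finset.mem_Icc] at hi
      by_cases him : i ≤ m
      · have := hτ i (Finset.mem_Icc.mpr ⟨hi.1, him⟩)
        rw [Finset.mem_Icc] at this ⊢
        omega
      · rw [hτid i (by rw [Finset.mem_Icc]; omega)]
        rw [Finset.mem_Icc]; omega
    have hστn : ∀ i ∈ Finset.Icc 1 n, τ (σ i) = i := by
      intro i hi
      rw [Finset.mem_Icc] at hi
      by_cases him : i ≤ m
      · exact hστ i (Finset.mem_Icc.mpr ⟨hi.1, him⟩)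
      · rw [hσid i (by rw [Finset.mem_Icc]; omega), hτid i (by rw [Finset.mem_Icc]; omega)]
    have hτσn : ∀ i ∈ Finset.Icc 1 n, σ (τ i) = i := by
      intro i hi
      rw [Finset.mem_Icc] at hi
      by_cases him : i ≤ m
      · exact hτσ i (Finset.mem_Icc.mpr ⟨hi.1, him⟩)
      · rw [hτid i (by rw [Finset.mem_Icc]; omega), hσid i (by rw [Finset.mem_Icc]; omega)]
    have hpadeq : padTo m q = fun i => padTo m Q (σ i) := by
      funext i
      show padTo m q i = padTo m Q (σ i)
      by_cases him : i ≤ m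
      · have hσim : σ i ≤ m := by
          by_cases hi1 : 1 ≤ i
          · have := hσ i (Finset.mem_Icc.mpr ⟨hi1, him⟩)
            rw [Finset.mem_Icc] at this
            exact this.2
          · rw [hσid i (by rw [Finset.mem_Icc]; omega)]
            exact him
        unfold padTo
        rw [if_pos him, if_pos hσim]
      · unfold padTo
        rw [if_neg him, hσid i (by rw [Finset.mem_Icc]; omega), if_neg him]
    have hprefq : ∀ k, 1 ≤ k → k ≤ m → ∑ i ∈ Finset.Icc 1 k, P i ≤ ∑ i ∈ Finset.Icc 1 k, q i := by
      intro k hk1 hkm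
      have h := hQmaj k hk1 (by omega)
      rw [topSum_eq_prefix hPnn hdec (by omega)] at h
      have h2 : topSum n (padTo m Q) k = topSum n (padTo m q) k := by
        rw [hpadeq]
        exact (topSum_comp (padTo m Q) hσn hτn hστn hτσn k).symm
      rw [h2, topSum_eq_prefix (pad_nonneg hqpmf.1) (pad_dec hqpmf.1 hqdec) (by omega),
          pad_prefix q hkm] at h
      exact h
    have hren : renyiH m α Q = renyiH m α q := by
      unfold renyiH
      by_cases h1 : α = 1
      · rw [if_pos h1, if_pos h1]
        rw [hq]
        rw [sum_comp_perm (fun i => Q i * Real.log (Q i)) hσ hστ]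
      · rw [if_neg h1, if_neg h1]
        rw [hq]
        rw [sum_comp_perm (fun i => Q i ^ α) hσ hστ]
    rw [hren]
    exact schur_le (by omega) hX hqpmf hXdec (H4 q hqpmf hqdec hprefq) hα

set_option maxHeartbeats 2000000 in
theorem stmt11 (n m : ℕ) (hm : 2 ≤ m) (hmn : m < n)
    (P : ℕ → ℝ) (hP : IsPMF n P) (hdec : DecOn n P) :
    ∀ α : ℝ, 0 < α →
      IsGreatest (renyiH m α '' {Q | IsPMF m Q ∧ MajorizedBy n P (padTo m Q)})
        (renyiH m α (tildeX n m P)) := by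
  intro α hα
  have hPpos := hP.1
  have hPsum := hP.2
  have hm0 : (0:ℝ) < (m:ℝ) := by positivity
  have hm2R : (2:ℝ) ≤ (m:ℝ) := by exact_mod_cast hm
  by_cases hu : P 1 < 1 / (m : ℝ)
  · -- uniform case
    have hXeq : ∀ i, tildeX n m P i = 1 / (m:ℝ) := fun i => by
      simp only [tildeX, if_pos hu]
    have hXconst : ∀ k, ∑ i ∈ Finset.Icc 1 k, tildeX n m P i = (k:ℝ) * (1 / (m:ℝ)) := by
      intro k
      rw [Finset.sum_congr rfl (fun i _ => hXeq i), prefix_const]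
    have hXpmf : IsPMF m (tildeX n m P) := by
      constructor
      · intro i _
        rw [hXeq]
        positivity
      · rw [hXconst]
        field_simp
    have hXdec : DecOn m (tildeX n m P) := by
      intro i _ j _ _
      rw [hXeq, hXeq]
    apply main_of n m hm hmn P _ hP hdec hXpmf hXdec ?_ ?_ α hα
    · intro k hk1 hkm
      have h1 : ∑ i ∈ Finset.Icc 1 k, P i ≤ ∑ _i ∈ Finset.Icc 1 k, P 1 := by
        apply Finset.sum_le_sum
        intro i hi
        rw [Finset.mem_Icc] at hi
        exact hdec 1 (Finset.mem_Icc.mpr ⟨le_refl 1, by omega⟩) i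
          (Finset.mem_Icc.mpr ⟨hi.1, by omega⟩) hi.1
      rw [prefix_const] at h1
      rw [hXconst]
      have hk0 : (0:ℝ) ≤ (k:ℝ) := Nat.cast_nonneg k
      nlinarith [hu.le]
    · intro q hqpmf hqdec hpq k hk1 hkm
      rw [hXconst]
      by_cases hkmeq : k = m
      · subst hkmeq
        rw [hqpmf.2]
        rw [mul_one_div, div_self (by positivity)]
      · have hklt : k < m := by omega
        have hkmR : (k:ℝ) < (m:ℝ) := by exact_mod_cast hklt
        have hqk : 0 < q k := hqpmf.1 k (Finset.mem_Icc.mpr ⟨hk1, hkm⟩)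
        have h1 : (k:ℝ) * q k ≤ ∑ i ∈ Finset.Icc 1 k, q i := by
          rw [← prefix_const k (q k)]
          apply Finset.sum_le_sum
          intro i hi
          rw [Finset.mem_Icc] at hi
          exact hqdec i (Finset.mem_Icc.mpr ⟨hi.1, by omega⟩)
            k (Finset.mem_Icc.mpr ⟨hk1, hkm⟩) hi.2
        have hsplit := prefix_split q hkm
        have h2 : ∑ i ∈ Finset.Ioc k m, q i ≤ ((m:ℝ) - k) * q k := by
          have : ∑ i ∈ Finset.Ioc k m, q i ≤ ∑ _i ∈ Finset.Ioc k m, q k := by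
            apply Finset.sum_le_sum
            intro i hi
            rw [Finset.mem_Ioc] at hi
            exact hqdec k (Finset.mem_Icc.mpr ⟨hk1, hkm⟩) i
              (Finset.mem_Icc.mpr ⟨by omega, hi.2⟩) hi.1.le
          rw [Finset.sum_const, Nat.card_Ioc, nsmul_eq_mul, Nat.cast_sub hkm] at this
          exact this
        have hq1 : ∑ i ∈ Finset.Icc 1 m, q i = 1 := hqpmf.2
        rw [hq1] at hsplit
        have e1 := mul_le_mul_of_nonneg_left h1 (by linarith : (0:ℝ) ≤ (m:ℝ) - k)
        have h2' : 1 - ∑ i ∈ Finset.Icc 1 k, q i ≤ ((m:ℝ) - k) * q k := by linarith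
        have e2 := mul_le_mul_of_nonneg_left h2' (by positivity : (0:ℝ) ≤ (k:ℝ))
        rw [mul_one_div, div_le_iff₀ hm0]
        nlinarith [e1, e2]
  · -- non-uniform case
    push_neg at hu
    set S : Set ℕ := {i : ℕ | 1 ≤ i ∧ i ≤ m - 1 ∧
      ((m : ℝ) - (i : ℝ))⁻¹ * ∑ j ∈ Finset.Icc (i + 1) n, P j ≤ P i} with hS
    have hnStar : nStar n m P = sSup S := rfl
    have hm1R : (0:ℝ) < (m:ℝ) - 1 := by linarith
    have h1split : P 1 + ∑ j ∈ Finset.Icc 2 n, P j = 1 := by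
      have := prefix_split P (show 1 ≤ n by omega)
      rw [hPsum] at this
      rw [show Finset.Icc 2 n = Finset.Ioc 1 n from Finset.Icc_add_one_left_eq_Ioc 1 n] at *
      simp only [Finset.Icc_self, Finset.sum_singleton] at this
      linarith
    have h1mem : 1 ∈ S := by
      refine ⟨le_refl 1, by omega, ?_⟩
      have hmul : ((m:ℝ) - 1) * (((m:ℝ) - 1)⁻¹ * ∑ j ∈ Finset.Icc 2 n, P j)
          = ∑ j ∈ Finset.Icc 2 n, P j := by
        rw [← mul_assoc, mul_inv_cancel₀ hm1R.ne', one_mul]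
      have hP1 : 1 ≤ (m:ℝ) * P 1 := by have := (div_le_iff₀ hm0).mp hu; linarith
      push_cast
      nlinarith [hmul, h1split, hP1, hm1R]
    have hSbdd : BddAbove S := ⟨m - 1, fun i hi => hi.2.1⟩
    have hNmem : nStar n m P ∈ S := by
      rw [hnStar]
      exact Nat.sSup_mem ⟨1, h1mem⟩ hSbdd
    obtain ⟨N, hN⟩ : ∃ N, N = nStar n m P := ⟨_, rfl⟩
    rw [← hN] at hNmem
    obtain ⟨hN1, hNm1, hcondN⟩ := hNmem
    have hNle : ∀ i ∈ S, i ≤ N := by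
      intro i hi
      rw [hN, hnStar]
      exact le_csSup hSbdd hi
    have hNn : N < n := by omega
    have hNm : N < m := by omega
    have hNmR : (N:ℝ) < (m:ℝ) := by exact_mod_cast hNm
    obtain ⟨T, hT⟩ : ∃ T, T = ∑ j ∈ Finset.Icc (N + 1) n, P j := ⟨_, rfl⟩
    obtain ⟨A, hA⟩ : ∃ A, A = ∑ j ∈ Finset.Icc 1 N, P j := ⟨_, rfl⟩
    obtain ⟨t, ht⟩ : ∃ t : ℝ, t = ((m:ℝ) - (N:ℝ))⁻¹ * T := ⟨_, rfl⟩
    rw [← hT] at hcondN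
    have hmN : (0:ℝ) < (m:ℝ) - (N:ℝ) := by linarith
    have hAT : A + T = 1 := by
      have := prefix_split P (show N ≤ n by omega)
      rw [hPsum] at this
      rw [hA, hT, show Finset.Icc (N+1) n = Finset.Ioc N n from Finset.Icc_add_one_left_eq_Ioc N n]
      linarith
    have hTpos : 0 < T := by
      rw [hT]
      apply Finset.sum_pos
      · intro i hi
        rw [Finset.mem_Icc] at hi
        exact hPpos i (Finset.mem_Icc.mpr ⟨by omega, hi.2⟩)
      · exact ⟨N + 1, Finset.mem_Icc.mpr ⟨le_refl _, by omega⟩⟩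
    have htpos : 0 < t := by rw [ht]; exact mul_pos (inv_pos.mpr hmN) hTpos
    have htP : t ≤ P N := by rw [ht]; exact hcondN
    have htid : ((m:ℝ) - (N:ℝ)) * t = 1 - A := by
      rw [ht, ← mul_assoc, mul_inv_cancel₀ hmN.ne', one_mul]
      linarith
    have hu' : ¬ P 1 < 1 / (m:ℝ) := not_lt.mpr hu
    have hXval_le : ∀ i, i ≤ N → tildeX n m P i = P i := by
      intro i hi
      simp only [tildeX, if_neg hu', ← hN, if_pos hi]
    have hXval_gt : ∀ i, N < i → tildeX n m P i = t := by
      intro i hi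
      simp only [tildeX, if_neg hu', ← hN, if_neg (not_le.mpr hi), ← hT, ← ht]
    have hXpre_le : ∀ k, k ≤ N → ∑ i ∈ Finset.Icc 1 k, tildeX n m P i
        = ∑ i ∈ Finset.Icc 1 k, P i := by
      intro k hk
      apply Finset.sum_congr rfl
      intro i hi
      rw [Finset.mem_Icc] at hi
      exact hXval_le i (by omega)
    have hXpre : ∀ k, N ≤ k → ∑ i ∈ Finset.Icc 1 k, tildeX n m P i
        = A + ((k:ℝ) - (N:ℝ)) * t := by
      intro k hNk
      rw [prefix_split _ hNk]
      have e1 : ∑ i ∈ Finset.Icc 1 N, tildeX n m P i = A := by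
        rw [hXpre_le N (le_refl N), hA]
      have e2 : ∑ i ∈ Finset.Ioc N k, tildeX n m P i = ((k:ℝ) - (N:ℝ)) * t := by
        rw [Finset.sum_congr rfl (fun i hi => hXval_gt i (Finset.mem_Ioc.mp hi).1),
          Finset.sum_const, Nat.card_Ioc, nsmul_eq_mul, Nat.cast_sub hNk]
      rw [e1, e2]
    have hXsum1 : A + ((m:ℝ) - (N:ℝ)) * t = 1 := by
      rw [htid]; ring
    have hXpmf : IsPMF m (tildeX n m P) := by
      constructor
      · intro i hi
        rw [Finset.mem_Icc] at hi
        by_cases hiN : i ≤ N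
        · rw [hXval_le i hiN]
          exact hPpos i (Finset.mem_Icc.mpr ⟨hi.1, by omega⟩)
        · rw [hXval_gt i (by omega)]
          exact htpos
      · rw [hXpre m (by omega)]
        exact hXsum1
    have hXdec : DecOn m (tildeX n m P) := by
      intro i hi j hj hij
      rw [Finset.mem_Icc] at hi hj
      by_cases hjN : j ≤ N
      · rw [hXval_le i (by omega), hXval_le j hjN]
        exact hdec i (Finset.mem_Icc.mpr ⟨hi.1, by omega⟩) j
          (Finset.mem_Icc.mpr ⟨hj.1, by omega⟩) hij
      · rw [hXval_gt j (by omega)]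
        by_cases hiN : i ≤ N
        · rw [hXval_le i hiN]
          exact le_trans htP (hdec i (Finset.mem_Icc.mpr ⟨hi.1, by omega⟩) N
            (Finset.mem_Icc.mpr ⟨by omega, by omega⟩) hiN)
        · rw [hXval_gt i (by omega)]
    have hPN1 : N + 1 ≤ m - 1 → P (N + 1) < t := by
      intro hle
      have hnot : N + 1 ∉ S := fun hmem => by
        have := hNle _ hmem
        omega
      have hcond : ¬ (((m : ℝ) - ((N+1 : ℕ) : ℝ))⁻¹ * ∑ j ∈ Finset.Icc ((N+1) + 1) n, P j
          ≤ P (N+1)) := fun hc => hnot ⟨by omega, hle, hc⟩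
      push_neg at hcond
      have hsplit2 : P (N + 1) + ∑ j ∈ Finset.Icc (N + 1 + 1) n, P j = T := by
        have h0 := Finset.sum_Ioc_consecutive P (show N ≤ N + 1 by omega) (show N + 1 ≤ n by omega)
        rw [Nat.Ioc_succ_singleton, Finset.sum_singleton] at h0
        rw [hT, show Finset.Icc (N+1) n = Finset.Ioc N n from Finset.Icc_add_one_left_eq_Ioc N n,
          show Finset.Icc (N+1+1) n = Finset.Ioc (N+1) n from Finset.Icc_add_one_left_eq_Ioc (N+1) n]
        linarith
      have hm1N : (0:ℝ) < (m:ℝ) - ((N:ℝ) + 1) := by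
        have h9 : N + 1 < m := by omega
        have h8 := (Nat.cast_lt (α := ℝ)).mpr h9
        push_cast at h8
        linarith
      have hkey : ((m:ℝ) - ((N:ℝ)+1)) * (((m:ℝ) - ((N:ℝ)+1))⁻¹ * ∑ j ∈ Finset.Icc (N+1+1) n, P j)
          = ∑ j ∈ Finset.Icc (N+1+1) n, P j := by
        rw [← mul_assoc, mul_inv_cancel₀ hm1N.ne', one_mul]
      push_cast at hcond
      have hc2 : ((m:ℝ) - ((N:ℝ)+1)) * P (N+1) < ∑ j ∈ Finset.Icc (N+1+1) n, P j := by
        have h7 := mul_lt_mul_of_pos_left hcond hm1N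
        rwa [hkey] at h7
      have h2 : ((m:ℝ) - (N:ℝ)) * P (N+1) < T := by linarith
      have hkey2 : ((m:ℝ) - (N:ℝ)) * t = T := by
        rw [ht, ← mul_assoc, mul_inv_cancel₀ hmN.ne', one_mul]
      have h6 : ((m:ℝ) - (N:ℝ)) * P (N+1) < ((m:ℝ) - (N:ℝ)) * t := by rw [hkey2]; exact h2
      exact (mul_lt_mul_iff_right₀ hmN).mp h6
    clear hNle hSbdd h1mem hnStar hS
    clear S
    apply main_of n m hm hmn P _ hP hdec hXpmf hXdec ?_ ?_ α hα
    · -- H3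
      intro k hk1 hkm
      by_cases hkN : k ≤ N
      · rw [hXpre_le k hkN]
      · push_neg at hkN
        rw [hXpre k (by omega)]
        by_cases hkmeq : k = m
        · subst hkmeq
          have : ∑ i ∈ Finset.Icc 1 k, P i ≤ 1 := by
            rw [← hPsum]
            exact Finset.sum_le_sum_of_subset_of_nonneg (Finset.Icc_subset_Icc_right (by omega))
              (fun i hi _ => (hPpos i hi).le)
          push_cast
          nlinarith [hXsum1, this]
        · have hkm1 : k ≤ m - 1 := by omega
          have hPlt : P (N+1) < t := hPN1 (by omega)
          rw [prefix_split P (show N ≤ k by omega)]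
          have hbound : ∑ i ∈ Finset.Ioc N k, P i ≤ ((k:ℝ) - (N:ℝ)) * t := by
            have hstep : ∑ i ∈ Finset.Ioc N k, P i ≤ ∑ _i ∈ Finset.Ioc N k, t := by
              apply Finset.sum_le_sum
              intro i hi
              rw [Finset.mem_Ioc] at hi
              have := hdec (N+1) (Finset.mem_Icc.mpr ⟨by omega, by omega⟩) i
                (Finset.mem_Icc.mpr ⟨by omega, by omega⟩) (by omega)
              linarith
            rw [Finset.sum_const, Nat.card_Ioc, nsmul_eq_mul, Nat.cast_sub (by omega : N ≤ k)]
              at hstep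
            exact hstep
          linarith
    · -- H4
      intro q hqpmf hqdec hpq k hk1 hkm
      by_cases hkN : k ≤ N
      · rw [hXpre_le k hkN]
        exact hpq k hk1 (by omega)
      · push_neg at hkN
        rw [hXpre k (by omega)]
        by_cases hkmeq : k = m
        · subst hkmeq
          rw [hqpmf.2, hXsum1]
        · have hklt : k < m := by omega
          have hkmR : (k:ℝ) < (m:ℝ) := by exact_mod_cast hklt
          have hNkR : (N:ℝ) < (k:ℝ) := by exact_mod_cast hkN
          have hqk : 0 < q k := hqpmf.1 k (Finset.mem_Icc.mpr ⟨hk1, hkm⟩)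
          have hA' : A ≤ ∑ i ∈ Finset.Icc 1 N, q i := by
            rw [hA]; exact hpq N hN1 (by omega)
          have hsq := prefix_split q (show N ≤ k by omega)
          have h1 : ((k:ℝ) - (N:ℝ)) * q k ≤ ∑ i ∈ Finset.Ioc N k, q i := by
            have hstep : ∑ _i ∈ Finset.Ioc N k, q k ≤ ∑ i ∈ Finset.Ioc N k, q i := by
              apply Finset.sum_le_sum
              intro i hi
              rw [Finset.mem_Ioc] at hi
              exact hqdec i (Finset.mem_Icc.mpr ⟨by omega, by omega⟩) k
                (Finset.mem_Icc.mpr ⟨hk1, hkm⟩) hi.2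
            rw [Finset.sum_const, Nat.card_Ioc, nsmul_eq_mul, Nat.cast_sub (by omega : N ≤ k)]
              at hstep
            exact hstep
          have hsplitm := prefix_split q hkm
          rw [hqpmf.2] at hsplitm
          have h2 : ∑ i ∈ Finset.Ioc k m, q i ≤ ((m:ℝ) - (k:ℝ)) * q k := by
            have hstep : ∑ i ∈ Finset.Ioc k m, q i ≤ ∑ _i ∈ Finset.Ioc k m, q k := by
              apply Finset.sum_le_sum
              intro i hi
              rw [Finset.mem_Ioc] at hi
              exact hqdec k (Finset.mem_Icc.mpr ⟨hk1, hkm⟩) i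
                (Finset.mem_Icc.mpr ⟨by omega, hi.2⟩) hi.1.le
            rw [Finset.sum_const, Nat.card_Ioc, nsmul_eq_mul, Nat.cast_sub hkm] at hstep
            exact hstep
          have h1' : ((k:ℝ) - (N:ℝ)) * q k
              ≤ (∑ i ∈ Finset.Icc 1 k, q i) - ∑ i ∈ Finset.Icc 1 N, q i := by linarith
          have e1 := mul_le_mul_of_nonneg_left h1' (by linarith : (0:ℝ) ≤ (m:ℝ) - k)
          have h2' : 1 - ∑ i ∈ Finset.Icc 1 k, q i ≤ ((m:ℝ) - (k:ℝ)) * q k := by linarith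
          have e2 := mul_le_mul_of_nonneg_left h2' (by linarith : (0:ℝ) ≤ (k:ℝ) - N)
          have e3 := mul_le_mul_of_nonneg_left hA' (by linarith : (0:ℝ) ≤ (m:ℝ) - k)
          have hstep2 : ((m:ℝ) - N) * A + ((k:ℝ) - N) * (1 - A)
              ≤ ((m:ℝ) - N) * ∑ i ∈ Finset.Icc 1 k, q i := by nlinarith [e1, e2, e3]
          have hlhs : ((m:ℝ) - N) * (A + ((k:ℝ) - N) * t)
              = ((m:ℝ) - N) * A + ((k:ℝ) - N) * (((m:ℝ) - N) * t) := by ring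
          rw [htid] at hlhs
          have h5 : ((m:ℝ) - N) * (A + ((k:ℝ) - N) * t)
              ≤ ((m:ℝ) - N) * ∑ i ∈ Finset.Icc 1 k, q i := by
            rw [hlhs]
            linarith [hstep2]
          exact le_of_mul_le_mul_left h5 hmN
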